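/- arXiv:2006.10605 — 2 statements merged into one kernel-verified Lean document; each statement's English description precedes it below -/
import Mathlib

section
/- Let d ≥ 1, let B = {z ∈ ℝ^d : ‖z‖ < 1} be the open unit ball, and let f : B × ℝ → ℝ^d be a continuously differentiable vector field whose hyperbolic norm is bounded, i.e. there is c > 0 with (2 / (1 − ‖z‖²)) · ‖f(z,t)‖ ≤ c for all z ∈ B and t ∈ ℝ. Then for every z₀ ∈ B there exists an integral curve γ : ℝ → ℝ^d with γ(0) = z₀, γ'(t) = f(γ(t), t) and ‖γ(t)‖ < 1 for all t ∈ ℝ; that is, the flow exists for all time and never leaves the Poincaré disk. (Instance of Proposition 1 for the Poincaré ball 𝔹^d, using completeness of the hyperbolic metric.) -/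
open Set

section PoincareAux
set_option maxHeartbeats 1000000

local notation "⟪" x ", " y "⟫" => @inner ℝ _ _ x y

open Metric Real NNReal Topology Filter

lemma aux_lip {E F : Type*} [NormedAddCommGroup E] [NormedSpace ℝ E]
    [NormedAddCommGroup F] [NormedSpace ℝ F] {G : E → F} {s K : Set E}
    (hs : IsOpen s) (hG : ContDiffOn ℝ 1 G s) (hK : IsCompact K) (hKc : Convex ℝ K)
    (hKs : K ⊆ s) : ∃ L : ℝ≥0, LipschitzOnWith L G K := by
  have hd : DifferentiableOn ℝ G s := hG.differentiableOn one_ne_zero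
  have hcont : ContinuousOn (fderivWithin ℝ G s) s :=
    hG.continuousOn_fderivWithin hs.uniqueDiffOn le_rfl
  obtain ⟨M, hM⟩ := hK.exists_bound_of_continuousOn (hcont.mono hKs)
  refine ⟨⟨max M 0, le_max_right _ _⟩,
    Convex.lipschitzOnWith_of_nnnorm_hasFDerivWithin_le
      (f' := fun x => fderivWithin ℝ G s x)
      (fun x hx => ((hd x (hKs hx)).hasFDerivWithinAt).mono hKs) (fun x hx => ?_) hKc⟩
  have : ‖fderivWithin ℝ G s x‖ ≤ max M 0 := le_trans (hM x hx) (le_max_left _ _)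
  exact NNReal.coe_le_coe.mp (show ((‖fderivWithin ℝ G s x‖₊ : ℝ≥0) : ℝ) ≤
    ((⟨max M 0, le_max_right _ _⟩ : ℝ≥0) : ℝ) from this)

lemma aux_slice {E F : Type*} [NormedAddCommGroup E] [NormedAddCommGroup F]
    {G : E × ℝ → F} {K₁ : Set E} {I : Set ℝ} {L : ℝ≥0}
    (h : LipschitzOnWith L G (K₁ ×ˢ I)) {t : ℝ} (ht : t ∈ I) :
    LipschitzOnWith L (fun z => G (z, t)) K₁ := by
  intro z hz z' hz'
  have := h (Set.mk_mem_prod hz ht) (Set.mk_mem_prod hz' ht)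
  rwa [Prod.edist_eq, edist_self, max_eq_left zero_le] at this

lemma aux_barrier {E : Type*} [NormedAddCommGroup E] [InnerProductSpace ℝ E]
    {γ F : ℝ → E} {b c w0 : ℝ} (hc : 0 < c) (hw0 : 0 < w0) (hw1 : w0 ≤ 1) (hb : 0 ≤ b)
    (hγc : ContinuousOn γ (Icc 0 b))
    (hγ' : ∀ t ∈ Ico 0 b, HasDerivWithinAt γ (F t) (Ici t) t)
    (hF : ∀ t ∈ Ico 0 b, ‖γ t‖ ^ 2 ≤ 1 - w0 * Real.exp (-(c * b)) / 2 →
      ‖F t‖ ≤ c / 2 * (1 - ‖γ t‖ ^ 2))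
    (h0 : ‖γ 0‖ ^ 2 ≤ 1 - w0) :
    ∀ t ∈ Icc 0 b, ‖γ t‖ ^ 2 ≤ 1 - w0 * Real.exp (-(c * b)) := by
  set β := w0 * Real.exp (-(c * b)) with hβ
  have hβpos : 0 < β := mul_pos hw0 (Real.exp_pos _)
  have hβle : β ≤ w0 := by
    have : Real.exp (-(c * b)) ≤ 1 := Real.exp_le_one_iff.mpr (by nlinarith)
    nlinarith
  set S := {t : ℝ | t ∈ Icc 0 b ∧ ∀ s ∈ Icc 0 t, ‖γ s‖ ^ 2 ≤ 1 - β / 2} with hS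
  have h0S : 0 ∈ S := by
    refine ⟨⟨le_rfl, hb⟩, fun s hs => ?_⟩
    rw [show s = (0:ℝ) from le_antisymm hs.2 hs.1]
    nlinarith
  have hSne : S.Nonempty := ⟨0, h0S⟩
  have hSbdd : BddAbove S := ⟨b, fun t ht => ht.1.2⟩
  -- Grönwall estimate on [0, T'] for any T' ∈ S
  have key : ∀ T' ∈ S, ∀ s ∈ Icc (0:ℝ) T', ‖γ s‖ ^ 2 ≤ 1 - β := by
    intro T' hT' s hs
    set u : ℝ → ℝ := fun s => ⟪γ s, γ s⟫ - 1 with hu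
    have huval : ∀ s, u s = ‖γ s‖ ^ 2 - 1 := fun s => by
      rw [hu]; simp [real_inner_self_eq_norm_sq]
    set u' : ℝ → ℝ := fun s => ⟪γ s, F s⟫ + ⟪F s, γ s⟫ with hu'
    have hsub : Icc (0:ℝ) T' ⊆ Icc 0 b := Icc_subset_Icc le_rfl hT'.1.2
    have hucont : ContinuousOn u (Icc 0 T') := by
      have : ContinuousOn γ (Icc 0 T') := hγc.mono hsub
      exact (this.inner this).sub continuousOn_const
    have husub : ∀ x ∈ Ico (0:ℝ) T', HasDerivWithinAt u (u' x) (Ici x) x := by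
      intro x hx
      have hγd := hγ' x ⟨hx.1, lt_of_lt_of_le hx.2 hT'.1.2⟩
      exact (HasDerivWithinAt.inner (𝕜 := ℝ) hγd hγd).sub_const 1
    have hbnd : ∀ x ∈ Ico (0:ℝ) T', u' x ≤ (-c) * u x + 0 := by
      intro x hx
      have hmem : ‖γ x‖ ^ 2 ≤ 1 - β / 2 := hT'.2 x ⟨hx.1, hx.2.le⟩
      have hγle : ‖γ x‖ ≤ 1 := by nlinarith [norm_nonneg (γ x)]
      have hFb := hF x ⟨hx.1, lt_of_lt_of_le hx.2 hT'.1.2⟩ hmem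
      have h1 := real_inner_le_norm (γ x) (F x)
      have h2 := real_inner_le_norm (F x) (γ x)
      have h3 : ‖F x‖ * ‖γ x‖ ≤ c / 2 * (1 - ‖γ x‖ ^ 2) := by
        nlinarith [norm_nonneg (F x), norm_nonneg (γ x)]
      have := huval x
      simp only [hu', norm_mul] at *
      nlinarith [norm_nonneg (γ x), norm_nonneg (F x)]
    have hg := le_gronwallBound_of_liminf_deriv_right_le hucont
      (fun x hx r hr => (husub x hx).liminf_right_slope_le hr) (le_refl (u 0)) hbnd
    have := hg s hs
    rw [gronwallBound_ε0, sub_zero] at this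
    have hu0 : u 0 ≤ -w0 := by rw [huval]; linarith
    have hexp : Real.exp (-(c * b)) ≤ Real.exp (-c * s) := by
      apply Real.exp_le_exp.mpr; nlinarith [hs.1, hs.2, hT'.1.2]
    have : u s ≤ -w0 * Real.exp (-c * s) := by
      calc u s ≤ u 0 * Real.exp (-c * s) := this
        _ ≤ -w0 * Real.exp (-c * s) := by
            apply mul_le_mul_of_nonneg_right hu0 (Real.exp_pos _).le
    rw [huval] at this
    nlinarith [Real.exp_pos (-c * s)]
  set τ := sSup S with hτ
  have hτ0 : 0 ≤ τ := le_csSup hSbdd h0S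
  have hτb : τ ≤ b := csSup_le hSne fun t ht => ht.1.2
  have hIco : ∀ s ∈ Ico (0:ℝ) τ, ‖γ s‖ ^ 2 ≤ 1 - β := by
    intro s hs
    obtain ⟨t', ht'S, hst'⟩ := exists_lt_of_lt_csSup hSne hs.2
    exact key t' ht'S s ⟨hs.1, hst'.le⟩
  have hτmem : ‖γ τ‖ ^ 2 ≤ 1 - β / 2 := by
    rcases eq_or_lt_of_le hτ0 with h0τ | h0τ
    · rw [← h0τ]; nlinarith
    · have hcw : ContinuousWithinAt (fun s => ‖γ s‖ ^ 2) (Ico 0 τ) τ := by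
        have := (hγc.norm.pow 2).continuousWithinAt (x := τ) ⟨hτ0, hτb⟩
        exact this.mono (fun x hx => ⟨hx.1, hx.2.le.trans hτb⟩)
      have hne : (𝓝[Ico (0:ℝ) τ] τ).NeBot := by
        rw [← mem_closure_iff_nhdsWithin_neBot, closure_Ico (show (0:ℝ) ≠ τ from ne_of_lt h0τ)]
        exact ⟨hτ0, le_rfl⟩
      have hev : ∀ᶠ x in 𝓝[Ico (0:ℝ) τ] τ, ‖γ x‖ ^ 2 ≤ 1 - β / 2 :=
        eventually_mem_nhdsWithin.mono fun x hx =>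
          le_trans (hIco x hx) (by linarith)
      exact le_of_tendsto hcw hev
  have hτS : τ ∈ S := by
    refine ⟨⟨hτ0, hτb⟩, fun s hs => ?_⟩
    rcases lt_or_eq_of_le hs.2 with hlt | heq
    · exact le_trans (hIco s ⟨hs.1, hlt⟩) (by linarith)
    · rw [heq]; exact hτmem
  have hτeq : τ = b := by
    by_contra hne
    have hτltb : τ < b := lt_of_le_of_ne hτb hne
    have hτβ : ‖γ τ‖ ^ 2 ≤ 1 - β := key τ hτS τ ⟨hτ0, le_rfl⟩
    have hcw : ContinuousWithinAt (fun s => ‖γ s‖ ^ 2) (Icc 0 b) τ :=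
      (hγc.norm.pow 2).continuousWithinAt ⟨hτ0, hτb⟩
    have hev : ∀ᶠ x in 𝓝[Icc (0:ℝ) b] τ, ‖γ x‖ ^ 2 < 1 - β / 2 :=
      Filter.Tendsto.eventually_lt_const (by linarith : ‖γ τ‖ ^ 2 < 1 - β / 2) hcw
    rw [eventually_nhdsWithin_iff, Metric.eventually_nhds_iff] at hev
    obtain ⟨ε, hε, hball⟩ := hev
    set t' := min (τ + ε / 2) b with ht'
    have ht'τ : τ < t' := lt_min (by linarith) hτltb
    have ht'S : t' ∈ S := by
      refine ⟨⟨by linarith, min_le_right _ _⟩, fun s hs => ?_⟩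
      rcases le_or_gt s τ with h | h
      · exact hτS.2 s ⟨hs.1, h⟩
      · refine (hball ?_ ⟨hs.1, hs.2.trans (min_le_right _ _)⟩).le
        rw [Real.dist_eq, abs_of_pos (by linarith)]
        have : s ≤ τ + ε / 2 := hs.2.trans (min_le_left _ _)
        linarith
    exact absurd (le_csSup hSbdd ht'S) (not_le.mpr ht'τ)
  intro t ht
  exact key b (hτeq ▸ hτS) t ht

variable {E : Type*} [NormedAddCommGroup E] [InnerProductSpace ℝ E] [ProperSpace E]
  [CompleteSpace E]

lemma aux_exists (f : E → ℝ → E)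
    (hf : ContDiffOn ℝ 1 (fun q : E × ℝ => f q.1 q.2) ((Metric.ball (0 : E) 1) ×ˢ (univ : Set ℝ)))
    {c : ℝ} (hc : 0 < c)
    (hbound : ∀ z : E, ‖z‖ < 1 → ∀ t : ℝ, ‖f z t‖ ≤ c / 2 * (1 - ‖z‖ ^ 2))
    {z₀ : E} (hz₀ : ‖z₀‖ < 1) {T : ℝ} (hT : 1 ≤ T) :
    ∃ γ : ℝ → E, γ 0 = z₀ ∧
      (∀ t ∈ Icc (-T) T, HasDerivWithinAt γ (f (γ t) t) (Icc (-T) T) t) ∧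
      ∀ t ∈ Icc (-T) T, ‖γ t‖ ^ 2 ≤ 1 - (1 - ‖z₀‖ ^ 2) * Real.exp (-(c * T)) := by
  have hT0 : 0 < T := by linarith
  set w0 : ℝ := 1 - ‖z₀‖ ^ 2 with hw0def
  have hw0 : 0 < w0 := by nlinarith [norm_nonneg z₀]
  have hw1 : w0 ≤ 1 := by nlinarith [norm_nonneg z₀]
  set β : ℝ := w0 * Real.exp (-(c * T)) with hβdef
  have hβpos : 0 < β := mul_pos hw0 (Real.exp_pos _)
  have hβle : β ≤ w0 := by
    have : Real.exp (-(c * T)) ≤ 1 := Real.exp_le_one_iff.mpr (by nlinarith)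
    nlinarith
  set χ : E → ℝ := fun z => Real.smoothTransition ((1 - β / 2 - ‖z‖ ^ 2) / (β / 2)) with hχdef
  have hχ01 : ∀ z, 0 ≤ χ z ∧ χ z ≤ 1 := fun z =>
    ⟨Real.smoothTransition.nonneg _, Real.smoothTransition.le_one _⟩
  have hχ1 : ∀ z : E, ‖z‖ ^ 2 ≤ 1 - β → χ z = 1 := by
    intro z hz
    apply Real.smoothTransition.one_of_one_le
    rw [le_div_iff₀ (by linarith : (0:ℝ) < β / 2)]
    linarith
  have hχ0 : ∀ z : E, 1 - β / 2 < ‖z‖ ^ 2 → χ z = 0 := by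
    intro z hz
    apply Real.smoothTransition.zero_of_nonpos
    apply div_nonpos_of_nonpos_of_nonneg (by linarith) (by linarith)
  set g : ℝ → E → E := fun t z => if ‖z‖ < 1 then χ z • f z t else 0 with hgdef
  -- the modified field is C¹ on all of E × ℝ
  have hχsm : ContDiff ℝ 1 fun z : E => χ z := by
    apply Real.smoothTransition.contDiff.comp
    exact (contDiff_const.sub (contDiff_norm_sq ℝ)).div_const _
  have hG : ContDiff ℝ 1 (fun p : E × ℝ => g p.2 p.1) := by
    rw [← contDiffOn_univ]
    apply contDiffOn_of_locally_contDiffOn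
    intro p _
    by_cases hp : ‖p.1‖ < 1
    · refine ⟨{q : E × ℝ | ‖q.1‖ < 1}, isOpen_lt (continuous_fst.norm) continuous_const, hp, ?_⟩
      have hset : (Metric.ball (0 : E) 1) ×ˢ (univ : Set ℝ) = {q : E × ℝ | ‖q.1‖ < 1} := by
        ext q; simp [Metric.mem_ball, dist_eq_norm]
      have hcd : ContDiffOn ℝ 1 (fun q : E × ℝ => χ q.1 • f q.1 q.2) {q : E × ℝ | ‖q.1‖ < 1} := by
        apply ContDiffOn.smul
        · exact (hχsm.comp contDiff_fst).contDiffOn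
        · rw [← hset]; exact hf
      rw [univ_inter]
      refine hcd.congr ?_
      intro q hq
      simp only [hgdef]
      rw [if_pos (show ‖q.1‖ < 1 from hq)]
    · refine ⟨{q : E × ℝ | 1 - β / 2 < ‖q.1‖ ^ 2},
        isOpen_lt continuous_const ((continuous_fst.norm).pow 2), ?_, ?_⟩
      · have : (1:ℝ) ≤ ‖p.1‖ := not_lt.mp hp
        simp only [mem_setOf_eq]; nlinarith
      · rw [univ_inter]
        apply (contDiffOn_const (c := (0:E))).congr
        intro q hq
        simp only [hgdef]
        by_cases hq1 : ‖q.1‖ < 1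
        · rw [if_pos hq1, hχ0 _ hq, zero_smul]
        · rw [if_neg hq1]
  -- bounds for g
  have hgle : ∀ t (z : E), ‖z‖ < 1 → ‖g t z‖ ≤ c / 2 * (1 - ‖z‖ ^ 2) := by
    intro t z hz
    simp only [hgdef]
    rw [if_pos hz, norm_smul, Real.norm_eq_abs, abs_of_nonneg (hχ01 z).1]
    have h1 := hbound z hz t
    have h2 := (hχ01 z).1
    have h3 := (hχ01 z).2
    have h4 : (0:ℝ) ≤ 1 - ‖z‖ ^ 2 := by nlinarith [norm_nonneg z]
    nlinarith [norm_nonneg (f z t)]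
  have hgC : ∀ t (z : E), ‖g t z‖ ≤ c / 2 := by
    intro t z
    by_cases hz : ‖z‖ < 1
    · refine (hgle t z hz).trans ?_
      have : (0:ℝ) ≤ ‖z‖ ^ 2 := by positivity
      nlinarith
    · simp only [hgdef]; rw [if_neg hz, norm_zero]; positivity
  have hgeq : ∀ t (z : E), ‖z‖ ^ 2 ≤ 1 - β → g t z = f z t := by
    intro t z hz
    have hz1 : ‖z‖ < 1 := by nlinarith [norm_nonneg z]
    simp only [hgdef]
    rw [if_pos hz1, hχ1 z hz, one_smul]
  -- Picard–Lindelöf on [-T, T]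
  set R : ℝ := c / 2 * T + 2 with hRdef
  have hR2 : (2:ℝ) ≤ R := by
    rw [hRdef]
    nlinarith [mul_pos (half_pos hc) hT0]
  obtain ⟨L, hL⟩ := aux_lip (s := (univ : Set (E × ℝ)))
    (K := (closedBall z₀ R) ×ˢ (Icc (-T) T)) isOpen_univ hG.contDiffOn
    ((isCompact_closedBall _ _).prod isCompact_Icc)
    ((convex_closedBall _ _).prod (convex_Icc _ _)) (subset_univ _)
  have hPL : IsPicardLindelof g (tmin := -T) (tmax := T) ⟨0, by constructor <;> linarith⟩ z₀
      ⟨R, by linarith⟩ 0 ⟨c / 2, by positivity⟩ L :=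
    { lipschitzOnWith := fun t ht => aux_slice hL ht
      continuousOn := fun x _ => (hG.continuous.comp
        (continuous_const.prodMk continuous_id)).continuousOn
      norm_le := fun t _ x _ => hgC t x
      mul_max_le := by
        change c / 2 * max (T - 0) (0 - -T) ≤ R - 0
        simp only [sub_zero, zero_sub, neg_neg, max_self]
        linarith }
  obtain ⟨γ, hγ0, hγ'⟩ := hPL.exists_eq_forall_mem_Icc_hasDerivWithinAt₀
  replace hγ0 : γ 0 = z₀ := hγ0
  have hγcont : ContinuousOn γ (Icc (-T) T) := fun t ht => (hγ' t ht).continuousWithinAt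
  -- forward barrier
  have hfwd : ∀ t ∈ Icc (0:ℝ) T, ‖γ t‖ ^ 2 ≤ 1 - β := by
    apply aux_barrier (F := fun t => g t (γ t)) hc hw0 hw1 hT0.le
      (hγcont.mono (Icc_subset_Icc (by linarith) le_rfl))
    · intro t ht
      refine (hγ' t ⟨by linarith [ht.1], ht.2.le⟩).mono_of_mem_nhdsWithin ?_
      exact mem_of_superset (Icc_mem_nhdsGE_of_mem ⟨le_rfl, ht.2⟩)
        (Icc_subset_Icc (by linarith [ht.1]) le_rfl)
    · intro t _ hsq
      have hz1 : ‖γ t‖ < 1 := by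
        by_contra h
        push_neg at h
        have h2 : (1:ℝ) ≤ ‖γ t‖ ^ 2 := by nlinarith
        nlinarith [mul_pos hw0 (Real.exp_pos (-(c*T)))]
      exact hgle t (γ t) hz1
    · rw [hγ0]; linarith
  -- backward barrier
  have hbwd : ∀ s ∈ Icc (0:ℝ) T, ‖γ (-s)‖ ^ 2 ≤ 1 - β := by
    apply aux_barrier (γ := fun s => γ (-s)) (F := fun s => -(g (-s) (γ (-s))))
      hc hw0 hw1 hT0.le
    · exact hγcont.comp continuous_neg.continuousOn
        (fun s hs => ⟨by linarith [hs.2], by linarith [hs.1]⟩)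
    · intro s hs
      have hbase : HasDerivWithinAt γ (g (-s) (γ (-s))) (Iic (-s)) (-s) := by
        refine (hγ' (-s) ⟨by linarith [hs.2], by linarith [hs.1]⟩).mono_of_mem_nhdsWithin ?_
        exact mem_of_superset (Icc_mem_nhdsLE_of_mem ⟨by linarith [hs.2], le_rfl⟩)
          (Icc_subset_Icc le_rfl (by linarith [hs.1]))
      have hneg : HasDerivWithinAt (fun x : ℝ => -x) (-1) (Ici s) s :=
        (hasDerivAt_neg s).hasDerivWithinAt
      have hmaps : MapsTo (fun x : ℝ => -x) (Ici s) (Iic (-s)) :=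
        fun x hx => show -x ≤ -s from neg_le_neg hx
      have hcomp := HasDerivWithinAt.scomp s hbase hneg hmaps
      have heq : ((-1 : ℝ) • g (-s) (γ (-s))) = -(g (-s) (γ (-s))) := by
        rw [neg_one_smul]
      rw [heq] at hcomp
      exact hcomp
    · intro s _ hsq
      have hz1 : ‖γ (-s)‖ < 1 := by
        by_contra h
        push_neg at h
        have h2 : (1:ℝ) ≤ ‖γ (-s)‖ ^ 2 := by nlinarith
        nlinarith [mul_pos hw0 (Real.exp_pos (-(c*T)))]
      rw [norm_neg]
      exact hgle (-s) (γ (-s)) hz1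
    · rw [neg_zero, hγ0]; linarith
  have hball : ∀ t ∈ Icc (-T) T, ‖γ t‖ ^ 2 ≤ 1 - β := by
    intro t ht
    rcases le_total 0 t with h | h
    · exact hfwd t ⟨h, ht.2⟩
    · have := hbwd (-t) ⟨by linarith, by linarith [ht.1]⟩
      rwa [neg_neg] at this
  refine ⟨γ, hγ0, fun t ht => ?_, hball⟩
  rw [← hgeq t (γ t) (hball t ht)]
  exact hγ' t ht

lemma aux_global (f : E → ℝ → E)
    (hf : ContDiffOn ℝ 1 (fun q : E × ℝ => f q.1 q.2) ((Metric.ball (0 : E) 1) ×ˢ (univ : Set ℝ)))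
    {c : ℝ} (hc : 0 < c)
    (hbound : ∀ z : E, ‖z‖ < 1 → ∀ t : ℝ, ‖f z t‖ ≤ c / 2 * (1 - ‖z‖ ^ 2))
    {z₀ : E} (hz₀ : ‖z₀‖ < 1) :
    ∃ γ : ℝ → E, γ 0 = z₀ ∧ (∀ t : ℝ, HasDerivAt γ (f (γ t) t) t) ∧ ∀ t : ℝ, ‖γ t‖ < 1 := by
  set w0 : ℝ := 1 - ‖z₀‖ ^ 2 with hw0def
  have hw0 : 0 < w0 := by nlinarith [norm_nonneg z₀]
  have hw1 : w0 ≤ 1 := by nlinarith [norm_nonneg z₀]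
  have H : ∀ n : ℕ, ∃ γ : ℝ → E, γ 0 = z₀ ∧
      (∀ t ∈ Icc (-((n:ℝ)+1)) ((n:ℝ)+1),
        HasDerivWithinAt γ (f (γ t) t) (Icc (-((n:ℝ)+1)) ((n:ℝ)+1)) t) ∧
      ∀ t ∈ Icc (-((n:ℝ)+1)) ((n:ℝ)+1),
        ‖γ t‖ ^ 2 ≤ 1 - w0 * Real.exp (-(c * ((n:ℝ)+1))) := by
    intro n
    exact aux_exists f hf hc hbound hz₀ (by have : (0:ℝ) ≤ (n:ℝ) := Nat.cast_nonneg n; linarith)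
  choose γs h0s hds hbs using H
  -- the exponential bound for index n
  have hβpos : ∀ n : ℕ, 0 < w0 * Real.exp (-(c * ((n:ℝ)+1))) :=
    fun n => mul_pos hw0 (Real.exp_pos _)
  have hβle1 : ∀ n : ℕ, w0 * Real.exp (-(c * ((n:ℝ)+1))) ≤ 1 := by
    intro n
    have : Real.exp (-(c * ((n:ℝ)+1))) ≤ 1 :=
      Real.exp_le_one_iff.mpr (by nlinarith [(Nat.cast_nonneg n : (0:ℝ) ≤ (n:ℝ)), hc.le])
    nlinarith [Real.exp_pos (-(c * ((n:ℝ)+1)))]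
  have hβmono : ∀ {j M : ℕ}, j ≤ M →
      w0 * Real.exp (-(c * ((M:ℝ)+1))) ≤ w0 * Real.exp (-(c * ((j:ℝ)+1))) := by
    intro j M hjM
    have hcast : (j:ℝ) ≤ (M:ℝ) := by exact_mod_cast hjM
    have := Real.exp_le_exp.mpr (show -(c * ((M:ℝ)+1)) ≤ -(c * ((j:ℝ)+1)) by nlinarith)
    nlinarith
  -- uniqueness of the solutions on common intervals
  have huniq : ∀ (k n : ℕ) (t : ℝ), |t| < (k:ℝ)+1 → |t| < (n:ℝ)+1 → γs k t = γs n t := by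
    intro k n t htk htn
    set M : ℕ := max k n with hM
    set a : ℝ := min (k:ℝ) (n:ℝ) + 1 with ha
    have ha1 : 1 ≤ a := by
      have h1 : (0:ℝ) ≤ (k:ℝ) := Nat.cast_nonneg k
      have h2 : (0:ℝ) ≤ (n:ℝ) := Nat.cast_nonneg n
      have := le_min h1 h2
      rw [ha]; linarith
    have hamem : ∀ j : ℕ, min (k:ℝ) (n:ℝ) ≤ (j:ℝ) → a ≤ (j:ℝ)+1 := by
      intro j hj
      rw [ha]; linarith
    set βM : ℝ := w0 * Real.exp (-(c * ((M:ℝ)+1))) with hβM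
    have hβMpos : 0 < βM := hβpos M
    have hβM1 : βM ≤ 1 := hβle1 M
    set ρ : ℝ := Real.sqrt (1 - βM) with hρ
    have hρsq : ρ ^ 2 = 1 - βM := Real.sq_sqrt (by linarith)
    have hρ0 : 0 ≤ ρ := Real.sqrt_nonneg _
    have hρ1 : ρ < 1 := by nlinarith
    -- Lipschitz constant for f on the common compact region
    obtain ⟨L, hL⟩ := aux_lip (s := (Metric.ball (0:E) 1) ×ˢ (univ : Set ℝ))
      (K := (closedBall (0:E) ρ) ×ˢ (Icc (-a) a))
      (isOpen_ball.prod isOpen_univ) hf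
      ((isCompact_closedBall _ _).prod isCompact_Icc)
      ((convex_closedBall _ _).prod (convex_Icc _ _))
      (prod_mono (fun z hz => by
        simp only [mem_closedBall, mem_ball, dist_zero_right] at *
        exact lt_of_le_of_lt hz hρ1) (subset_univ _))
    -- both curves stay in the common region and solve the ODE
    have hmem : ∀ j : ℕ, j ≤ M → a ≤ (j:ℝ)+1 → ∀ t' ∈ Ioo (-a) a,
        HasDerivAt (γs j) (f (γs j t') t') t' ∧ γs j t' ∈ closedBall (0:E) ρ := by
      intro j hjM haj t' ht'
      have ht'j : t' ∈ Icc (-((j:ℝ)+1)) ((j:ℝ)+1) :=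
        ⟨by linarith [ht'.1], by linarith [ht'.2]⟩
      constructor
      · refine (hds j t' ht'j).hasDerivAt ?_
        -- need strict inequality |t'| < a ≤ j+1 — but t' could equal ±a? no, Ioo
        exact Icc_mem_nhds (by linarith [ht'.1]) (by linarith [ht'.2])
      · have hb := hbs j t' ht'j
        have : ‖γs j t'‖ ^ 2 ≤ 1 - βM := le_trans hb (by have := hβmono hjM; linarith)
        simp only [mem_closedBall, dist_zero_right]
        rw [hρ]
        exact Real.le_sqrt_of_sq_le this
    -- apply uniqueness of ODE solutions
    have h0mem : (0:ℝ) ∈ Ioo (-a) a := ⟨by linarith, by linarith⟩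
    have heq : EqOn (γs k) (γs n) (Ioo (-a) a) := by
      apply ODE_solution_unique_of_mem_Ioo
        (v := fun t z => f z t)
        (s := fun t => if t ∈ Icc (-a) a then closedBall (0:E) ρ else ∅)
        (K := L) ?_ h0mem ?_ ?_ (by rw [h0s k, h0s n])
      · intro t _
        by_cases ht : t ∈ Icc (-a) a
        · rw [if_pos ht]
          exact aux_slice hL ht
        · rw [if_neg ht]
          exact lipschitzOnWith_empty _ _
      · intro t' ht'
        refine ⟨(hmem k (le_max_left _ _) (hamem k (min_le_left _ _)) t' ht').1, ?_⟩
        rw [if_pos (Ioo_subset_Icc_self ht')]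
        exact (hmem k (le_max_left _ _) (hamem k (min_le_left _ _)) t' ht').2
      · intro t' ht'
        refine ⟨(hmem n (le_max_right _ _) (hamem n (min_le_right _ _)) t' ht').1, ?_⟩
        rw [if_pos (Ioo_subset_Icc_self ht')]
        exact (hmem n (le_max_right _ _) (hamem n (min_le_right _ _)) t' ht').2
    apply heq
    have hta : |t| < a := by
      rw [ha]
      rcases min_cases (k:ℝ) (n:ℝ) with ⟨hmin, _⟩ | ⟨hmin, _⟩ <;> rw [hmin] <;> linarith
    exact abs_lt.mp hta
  -- glue
  set Γ : ℝ → E := fun t => γs ⌈|t|⌉₊ t with hΓ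
  have hceil : ∀ t : ℝ, |t| < (⌈|t|⌉₊ : ℝ) + 1 :=
    fun t => lt_of_le_of_lt (Nat.le_ceil _) (by linarith)
  have hΓeq : ∀ (n : ℕ) (t : ℝ), |t| < (n:ℝ)+1 → Γ t = γs n t :=
    fun n t ht => huniq _ n t (hceil t) ht
  have hmemIcc : ∀ (n : ℕ) (t : ℝ), |t| < (n:ℝ)+1 → t ∈ Icc (-((n:ℝ)+1)) ((n:ℝ)+1) := by
    intro n t ht
    have := abs_lt.mp ht
    exact ⟨by linarith [this.1], by linarith [this.2]⟩
  refine ⟨Γ, ?_, ?_, ?_⟩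
  · rw [hΓ]; exact h0s _
  · intro t
    set N : ℕ := ⌈|t|⌉₊ with hN
    have htN : |t| < (N:ℝ)+1 := hceil t
    have hO : ∀ᶠ s in 𝓝 t, Γ s = γs N s := by
      have hopen : IsOpen {s : ℝ | |s| < (N:ℝ)+1} :=
        isOpen_lt (continuous_abs) continuous_const
      exact eventually_of_mem (hopen.mem_nhds htN) (fun s hs => hΓeq N s hs)
    have habs := abs_lt.mp htN
    have hD : HasDerivAt (γs N) (f (γs N t) t) t := by
      refine (hds N t (hmemIcc N t htN)).hasDerivAt ?_
      exact Icc_mem_nhds (by linarith [habs.1]) habs.2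
    have hΓt : Γ t = γs N t := hΓeq N t htN
    rw [show Γ t = γs N t from hΓt]
    exact (EventuallyEq.hasDerivAt_iff hO).mpr hD
  · intro t
    set N : ℕ := ⌈|t|⌉₊ with hN
    have htN : |t| < (N:ℝ)+1 := hceil t
    have hb := hbs N t (hmemIcc N t htN)
    have hΓt : Γ t = γs N t := hΓeq N t htN
    rw [hΓt]
    by_contra h
    push_neg at h
    have h2 : (1:ℝ) ≤ ‖γs N t‖ ^ 2 := by nlinarith
    nlinarith [hβpos N]

end PoincareAux

/-- Instance of Proposition 1 for the Poincaré ball 𝔹ᵈ: a C¹ vector field on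
the open unit ball whose hyperbolic norm is bounded generates, from every
initial point of the ball, an integral curve defined for all time which never
leaves the ball. -/
theorem stmt_3 (d : ℕ) (hd : 1 ≤ d)
    (f : EuclideanSpace ℝ (Fin d) → ℝ → EuclideanSpace ℝ (Fin d))
    (hf : ContDiffOn ℝ 1 (fun q : EuclideanSpace ℝ (Fin d) × ℝ => f q.1 q.2)
      ((Metric.ball (0 : EuclideanSpace ℝ (Fin d)) 1) ×ˢ (univ : Set ℝ)))
    (c : ℝ) (hc : 0 < c)
    (hbound : ∀ z : EuclideanSpace ℝ (Fin d), ‖z‖ < 1 →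
      ∀ t : ℝ, (2 / (1 - ‖z‖ ^ 2)) * ‖f z t‖ ≤ c) :
    ∀ z₀ : EuclideanSpace ℝ (Fin d), ‖z₀‖ < 1 →
      ∃ γ : ℝ → EuclideanSpace ℝ (Fin d),
        γ 0 = z₀ ∧
        (∀ t : ℝ, HasDerivAt γ (f (γ t) t) t) ∧
        ∀ t : ℝ, ‖γ t‖ < 1 := by
  intro z₀ hz₀
  have hbound' : ∀ z : EuclideanSpace ℝ (Fin d), ‖z‖ < 1 →
      ∀ t : ℝ, ‖f z t‖ ≤ c / 2 * (1 - ‖z‖ ^ 2) := by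
    intro z hz t
    have h1 : 0 < 1 - ‖z‖ ^ 2 := by nlinarith [norm_nonneg z]
    have h2 := hbound z hz t
    rw [div_mul_eq_mul_div, div_le_iff₀ h1] at h2
    nlinarith [norm_nonneg (f z t)]
  exact aux_global f hf hc hbound' hz₀
end

section
/- Let n ≥ 1, let f : ℝⁿ × ℝ → ℝⁿ be continuously differentiable, and let p : ℝⁿ × ℝ → ℝ be a continuously differentiable, strictly positive function satisfying the continuity (Liouville) equation ∂p/∂t (z,t) = − div_z ( p(z,t) f(z,t) ) for all z ∈ ℝⁿ, t ∈ ℝ, where div_z g = Σᵢ ∂gᵢ/∂zᵢ. If z : ℝ → ℝⁿ is differentiable with z'(t) = f(z(t), t) for all t, then for all t, d/dt [ log p(z(t), t) ] = − (div_z f)(z(t), t). (Euclidean case of Proposition 2, 'Instantaneous change of variables'.) -/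
open Finset in
/-- The Euclidean divergence `div g (z) = Σᵢ ∂gᵢ/∂zᵢ (z)`, i.e. the trace of the
Jacobian of `g` at `z`. -/
noncomputable def eucDiv {n : ℕ}
    (g : EuclideanSpace ℝ (Fin n) → EuclideanSpace ℝ (Fin n))
    (z : EuclideanSpace ℝ (Fin n)) : ℝ :=
  ∑ i : Fin n, fderiv ℝ g z (EuclideanSpace.single i (1 : ℝ)) i

lemma euc_sum_single {n : ℕ} (x : EuclideanSpace ℝ (Fin n)) :
    ∑ i : Fin n, x i • EuclideanSpace.single i (1 : ℝ) = x := by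
  ext j
  rw [WithLp.ofLp_sum, Finset.sum_apply]
  simp [EuclideanSpace.single_apply]

/-- Euclidean case of Proposition 2 ("Instantaneous change of variables"):
if a strictly positive C¹ density `p` satisfies the Liouville / continuity
equation `∂p/∂t = − div_z (p f)` and `z(·)` is a trajectory of the C¹ vector
field `f`, then `d/dt log p(z(t), t) = − (div_z f)(z(t), t)`. -/
theorem stmt_4 (n : ℕ) (hn : 1 ≤ n)
    (f : EuclideanSpace ℝ (Fin n) × ℝ → EuclideanSpace ℝ (Fin n))
    (hf : ContDiff ℝ 1 f)
    (p : EuclideanSpace ℝ (Fin n) × ℝ → ℝ)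
    (hp : ContDiff ℝ 1 p)
    (hppos : ∀ z t, 0 < p (z, t))
    (hliouville : ∀ (z : EuclideanSpace ℝ (Fin n)) (t : ℝ),
      deriv (fun s => p (z, s)) t
        = - eucDiv (fun y => p (y, t) • f (y, t)) z)
    (z : ℝ → EuclideanSpace ℝ (Fin n))
    (hz : ∀ t : ℝ, HasDerivAt z (f (z t, t)) t) :
    ∀ t : ℝ,
      HasDerivAt (fun s => Real.log (p (z s, s)))
        (- eucDiv (fun y => f (y, t)) (z t)) t := by
  intro t
  have hpd : Differentiable ℝ p := hp.differentiable one_ne_zero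
  have hfd : Differentiable ℝ f := hf.differentiable one_ne_zero
  set zt := z t with hzt
  set v := f (zt, t) with hv
  set c := p (zt, t) with hc
  have hcne : c ≠ 0 := ne_of_gt (hppos zt t)
  set DP : EuclideanSpace ℝ (Fin n) →L[ℝ] ℝ :=
    (fderiv ℝ p (zt, t)).comp
      (ContinuousLinearMap.inl ℝ (EuclideanSpace ℝ (Fin n)) ℝ) with hDP
  set DF : EuclideanSpace ℝ (Fin n) →L[ℝ] EuclideanSpace ℝ (Fin n) :=
    (fderiv ℝ f (zt, t)).comp
      (ContinuousLinearMap.inl ℝ (EuclideanSpace ℝ (Fin n)) ℝ) with hDF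
  have hPslice : HasFDerivAt (fun y => p (y, t)) DP zt :=
    ((hpd (zt, t)).hasFDerivAt).comp zt (hasFDerivAt_prodMk_left zt t)
  have hFslice : HasFDerivAt (fun y => f (y, t)) DF zt :=
    ((hfd (zt, t)).hasFDerivAt).comp zt (hasFDerivAt_prodMk_left zt t)
  -- divergence of f at zt
  have hdivf : eucDiv (fun y => f (y, t)) zt
      = ∑ i : Fin n, DF (EuclideanSpace.single i (1 : ℝ)) i := by
    simp only [eucDiv, hFslice.fderiv]
  -- divergence of p • f at zt
  have hPF : HasFDerivAt (fun y => p (y, t) • f (y, t))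
      (c • DF + DP.smulRight v) zt := hPslice.smul hFslice
  have hDPv : DP v = ∑ i : Fin n, v i * DP (EuclideanSpace.single i (1 : ℝ)) := by
    conv_lhs => rw [← euc_sum_single v]
    rw [map_sum]
    simp [smul_eq_mul]
  have hdivpf : eucDiv (fun y => p (y, t) • f (y, t)) zt
      = c * eucDiv (fun y => f (y, t)) zt + DP v := by
    rw [hdivf, hDPv]
    simp only [eucDiv, hPF.fderiv, ContinuousLinearMap.add_apply,
      ContinuousLinearMap.smul_apply, ContinuousLinearMap.smulRight_apply,
      PiLp.add_apply, PiLp.smul_apply, smul_eq_mul]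
    rw [Finset.sum_add_distrib, Finset.mul_sum]
    congr 1
    exact Finset.sum_congr rfl fun i _ => by ring
  -- time derivative of p at (zt, t)
  have htime : HasDerivAt (fun s => p (zt, s)) (fderiv ℝ p (zt, t) (0, 1)) t :=
    ((hpd (zt, t)).hasFDerivAt).comp_hasDerivAt t
      ((hasDerivAt_const t zt).prodMk (hasDerivAt_id t))
  have htval : fderiv ℝ p (zt, t) ((0 : EuclideanSpace ℝ (Fin n)), (1 : ℝ))
      = -(c * eucDiv (fun y => f (y, t)) zt + DP v) := by
    rw [← hdivpf, ← hliouville zt t, htime.deriv]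
  -- total derivative along the trajectory
  have htraj : HasDerivAt (fun s => ((z s, s) : EuclideanSpace ℝ (Fin n) × ℝ))
      ((v, 1)) t := (hz t).prodMk (hasDerivAt_id t)
  have hcomp : HasDerivAt (fun s => p (z s, s)) (fderiv ℝ p (zt, t) (v, 1)) t :=
    HasFDerivAt.comp_hasDerivAt (l := p) (f := fun s => (z s, s)) t
      ((hpd (zt, t)).hasFDerivAt) htraj
  have hsplit : fderiv ℝ p (zt, t) ((v, (1 : ℝ))) = DP v + fderiv ℝ p (zt, t) (0, 1) := by
    have : ((v, (1 : ℝ)) : EuclideanSpace ℝ (Fin n) × ℝ) = (v, 0) + (0, 1) := by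
      simp [Prod.ext_iff]
    rw [this, map_add]
    rfl
  have hval : fderiv ℝ p (zt, t) ((v, (1 : ℝ)))
      = -(c * eucDiv (fun y => f (y, t)) zt) := by
    rw [hsplit, htval]; ring
  have hlog := hcomp.log hcne
  have : fderiv ℝ p (zt, t) ((v, (1 : ℝ))) / c
      = - eucDiv (fun y => f (y, t)) zt := by
    rw [hval]; field_simp
  rwa [this] at hlog
end
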